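/- arXiv:2601.14779 — 2 statements merged into one kernel-verified Lean document; each statement's English description precedes it below -/
import Mathlib

section
/- Let Ω ⊆ ℝ³ be a bounded open set and b a boundary point of Ω satisfying the exterior Lipschitz graph condition at b. Then ∫_{ℝ³ ∖ closure(Ω)} ‖z − x‖⁻⁶ dz tends to +∞ as x tends to b within Ω (i.e., the map x ↦ ∫_{ℝ³ ∖ closure(Ω)} ‖z − x‖⁻⁶ dz tends to infinity along the filter of neighborhoods of b restricted to Ω). (Claim (B.2) in the proof of Proposition B.) -/
open MeasureTheory Filter
open scoped ENNReal Topology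

noncomputable section

/-- The identification of `ℝ² × ℝ` with `ℝ³`: `(s, t) ↦ (s₁, s₂, t)`. -/
def emb (s : EuclideanSpace ℝ (Fin 2)) (t : ℝ) : EuclideanSpace ℝ (Fin 3) :=
  (EuclideanSpace.equiv (Fin 3) ℝ).symm ![s 0, s 1, t]

/-- The exterior Lipschitz graph condition at a boundary point `b` of `Ω ⊆ ℝ³`. -/
def ExtLipschitzGraphCond (Ω : Set (EuclideanSpace ℝ (Fin 3)))
    (b : EuclideanSpace ℝ (Fin 3)) : Prop :=
  ∃ δ > (0 : ℝ), ∃ A : EuclideanSpace ℝ (Fin 3) ≃ₗᵢ[ℝ] EuclideanSpace ℝ (Fin 3),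
    ∃ φ : EuclideanSpace ℝ (Fin 2) → ℝ, ∃ L : NNReal, LipschitzWith L φ ∧ φ 0 = 0 ∧
      ∀ (s : EuclideanSpace ℝ (Fin 2)) (t : ℝ), φ s < t → ‖s‖ ^ 2 + t ^ 2 < δ ^ 2 →
        b + A (emb s t) ∈ (closure Ω)ᶜ

lemma norm_emb_sq (s : EuclideanSpace ℝ (Fin 2)) (t : ℝ) :
    ‖emb s t‖ ^ 2 = ‖s‖ ^ 2 + t ^ 2 := by
  rw [EuclideanSpace.norm_eq, EuclideanSpace.norm_eq,
    Real.sq_sqrt (by positivity), Real.sq_sqrt (by positivity)]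
  simp [emb, Fin.sum_univ_three, Fin.sum_univ_two, sq_abs]

lemma emb_sub (s : EuclideanSpace ℝ (Fin 2)) (t d : ℝ) :
    emb s t - emb 0 d = emb s (t - d) := by
  ext i; fin_cases i <;> simp [emb]

lemma norm_emb_zero (d : ℝ) (hd : 0 ≤ d) : ‖emb 0 d‖ = d := by
  have h := norm_emb_sq 0 d
  simp at h
  nlinarith [norm_nonneg (emb 0 d)]

set_option maxHeartbeats 1000000 in
/-- **Claim (B.2) in the proof of Proposition B.** If `Ω ⊆ ℝ³` is a bounded open set and
`b ∈ ∂Ω` satisfies the exterior Lipschitz graph condition, then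
`∫_{ℝ³ ∖ closure Ω} ‖z − x‖⁻⁶ dz → +∞` as `x → b` within `Ω`. -/
theorem claim_B2 (Ω : Set (EuclideanSpace ℝ (Fin 3))) (hΩo : IsOpen Ω)
    (hΩb : Bornology.IsBounded Ω) (b : EuclideanSpace ℝ (Fin 3)) (hb : b ∈ frontier Ω)
    (hcond : ExtLipschitzGraphCond Ω b) :
    Filter.Tendsto
      (fun x : EuclideanSpace ℝ (Fin 3) =>
        ∫⁻ z in (closure Ω)ᶜ, ENNReal.ofReal (1 / ‖z - x‖ ^ 6))
      (nhdsWithin b Ω) (nhds ⊤) := by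
  obtain ⟨δ, hδ, A, φ, L, hφL, hφ0, hcone⟩ := hcond
  set c : ℝ := 1 / (2 * ((L : ℝ) + 1)) with hc
  have hL0 : (0:ℝ) ≤ L := L.coe_nonneg
  have hc0 : 0 < c := by positivity
  have hc2 : c ≤ 1/2 := by
    rw [hc, div_le_div_iff₀ (by positivity) (by norm_num)]; nlinarith
  have hLc : (L : ℝ) * c ≤ 1/2 := by
    rw [hc, mul_one_div, div_le_div_iff₀ (by positivity) (by norm_num)]; nlinarith
  have hbΩ : b ∉ Ω := by
    rw [hΩo.frontier_eq] at hb; exact hb.2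
  -- key: exterior contains dyadic balls along the axis
  have hball : ∀ d : ℝ, 0 < d → d < δ/2 →
      Metric.ball (b + A (emb 0 d)) (c*d) ⊆ (closure Ω)ᶜ := by
    intro d hd hdδ z hz
    set w := A.symm (z - b) with hwdef
    set s : EuclideanSpace ℝ (Fin 2) := (EuclideanSpace.equiv (Fin 2) ℝ).symm ![w 0, w 1]
      with hs
    set t : ℝ := w 2 with ht
    have hws : emb s t = w := by
      ext i; fin_cases i <;> simp [emb, hs, ht]
    have hz' : z = b + A (emb s t) := by
      rw [hws, hwdef]; simp
    have hdist : ‖emb s (t - d)‖ < c * d := by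
      rw [← emb_sub, hws]
      have h1 : dist z (b + A (emb 0 d)) < c * d := hz
      rw [dist_eq_norm] at h1
      have h2 : z - (b + A (emb 0 d)) = A (w - emb 0 d) := by
        rw [map_sub, hwdef]; simp; abel
      rwa [h2, A.norm_map] at h1
    have hsq : ‖s‖^2 + (t-d)^2 < (c*d)^2 := by
      have h := norm_emb_sq s (t - d)
      nlinarith [norm_nonneg (emb s (t - d))]
    have hcd : 0 < c * d := mul_pos hc0 hd
    have hts : d - c*d < t := by
      nlinarith [hsq, sq_nonneg ‖s‖, hcd, sq_nonneg (d - c*d - t)]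
    have hsn : ‖s‖ < c * d := by
      nlinarith [hsq, norm_nonneg s, sq_nonneg (t - d), hcd, sq_nonneg (‖s‖ - c*d)]
    have hφs : φ s < t := by
      have h1 : φ s ≤ (L : ℝ) * ‖s‖ := by
        have h2 := hφL.dist_le_mul s 0
        rw [hφ0, dist_zero_right, dist_zero_right] at h2
        calc φ s ≤ |φ s| := le_abs_self _
          _ = ‖φ s‖ := (Real.norm_eq_abs _).symm
          _ ≤ (L : ℝ) * ‖s‖ := h2
      nlinarith [mul_le_mul_of_nonneg_left hsn.le hL0]
    have hnorm : ‖s‖^2 + t^2 < δ^2 := by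
      have h1 : emb s t = emb s (t - d) + emb 0 d := by
        rw [← emb_sub, sub_add_cancel]
      have h2 : ‖emb s t‖ ≤ ‖emb s (t-d)‖ + ‖emb 0 d‖ := by
        rw [h1]; exact norm_add_le _ _
      rw [norm_emb_zero d hd.le] at h2
      have h3 : ‖emb s t‖ < δ := by nlinarith
      have h4 := norm_emb_sq s t
      nlinarith [norm_nonneg (emb s t)]
    have := hcone s t hφs hnorm
    rwa [← hz'] at this
  -- volume constants
  set V := volume (Metric.ball (0 : EuclideanSpace ℝ (Fin 3)) 1) with hV
  have hV0 : 0 < V := Metric.measure_ball_pos _ _ one_pos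
  have hVt : V ≠ ⊤ := measure_ball_lt_top.ne
  set v := V.toReal with hvdef
  have hv0 : 0 < v := ENNReal.toReal_pos hV0.ne' hVt
  -- lower bound for the integral
  have hlow : ∀ x ∈ Ω, ‖x - b‖ < δ/2 →
      ENNReal.ofReal (v * c^3/729 * (1/‖x-b‖)^3)
        ≤ ∫⁻ z in (closure Ω)ᶜ, ENNReal.ofReal (1/‖z-x‖^6) := by
    intro x hx hxδ
    set d := ‖x - b‖ with hddef
    have hd0 : 0 < d := by
      rw [hddef, norm_pos_iff, sub_ne_zero]
      rintro rfl; exact hbΩ hx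
    set q := b + A (emb 0 d) with hq
    have hsub := hball d hd0 hxδ
    have hvol : volume (Metric.ball q (c*d)) = ENNReal.ofReal ((c*d)^3) * V := by
      rw [Measure.addHaar_ball volume q (by positivity : (0:ℝ) ≤ c*d),
        finrank_euclideanSpace_fin, hV]
    calc ENNReal.ofReal (v * c^3/729 * (1/d)^3)
        = ENNReal.ofReal (1/(3*d)^6) * volume (Metric.ball q (c*d)) := by
          rw [hvol, ← ENNReal.ofReal_toReal hVt, ← hvdef,
            ← ENNReal.ofReal_mul (by positivity), ← ENNReal.ofReal_mul (by positivity)]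
          congr 1
          field_simp
          ring
      _ = ∫⁻ _ in Metric.ball q (c*d), ENNReal.ofReal (1/(3*d)^6) := by
          rw [setLIntegral_const]
      _ ≤ ∫⁻ z in Metric.ball q (c*d), ENNReal.ofReal (1/‖z-x‖^6) := by
          apply setLIntegral_mono' measurableSet_ball
          intro z hz
          apply ENNReal.ofReal_le_ofReal
          have hzx0 : 0 < ‖z - x‖ := by
            rw [norm_pos_iff, sub_ne_zero]
            intro h
            exact hsub hz (h ▸ subset_closure hx)
          have hzq : ‖z - q‖ < c * d := by
            have := mem_ball_iff_norm.1 hz; exact this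
          have hqb : ‖q - b‖ = d := by
            rw [hq, add_sub_cancel_left, A.norm_map, norm_emb_zero d hd0.le]
          have hbx : ‖b - x‖ = d := by rw [norm_sub_rev]
          have hzx : ‖z - x‖ ≤ 3 * d := by
            have h1 : z - x = (z - q) + (q - b) + (b - x) := by abel
            have h2 := norm_add_le (z - q + (q - b)) (b - x)
            have h3 := norm_add_le (z - q) (q - b)
            rw [← h1] at h2
            nlinarith
          apply one_div_le_one_div_of_le (by positivity)
          calc ‖z - x‖^6 ≤ (3*d)^6 := by
                apply pow_le_pow_left₀ hzx0.le hzx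
            _ = (3*d)^6 := rfl
      _ ≤ ∫⁻ z in (closure Ω)ᶜ, ENNReal.ofReal (1/‖z-x‖^6) :=
          lintegral_mono_set hsub
  -- the lower bound tends to ⊤
  have hnorm_tend : Tendsto (fun x => ‖x - b‖) (𝓝[Ω] b) (𝓝[>] 0) := by
    rw [tendsto_nhdsWithin_iff]
    constructor
    · have hcont : Continuous fun x : EuclideanSpace ℝ (Fin 3) => ‖x - b‖ :=
        (continuous_id.sub continuous_const).norm
      have : Tendsto (fun x : EuclideanSpace ℝ (Fin 3) => ‖x - b‖) (𝓝 b) (𝓝 0) := by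
        simpa using hcont.tendsto b
      exact this.mono_left nhdsWithin_le_nhds
    · filter_upwards [self_mem_nhdsWithin] with x hx
      rw [Set.mem_Ioi, norm_pos_iff, sub_ne_zero]
      rintro rfl; exact hbΩ hx
  have htend : Tendsto (fun x => ENNReal.ofReal (v*c^3/729 * (1/‖x - b‖)^3))
      (𝓝[Ω] b) (𝓝 ⊤) := by
    apply ENNReal.tendsto_ofReal_atTop.comp
    have h2 : Tendsto (fun u : ℝ => (1/u)^3) (𝓝[>](0:ℝ)) atTop := by
      apply (tendsto_pow_atTop (by norm_num : 3 ≠ 0)).comp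
      exact tendsto_inv_nhdsGT_zero.congr fun x => (one_div x).symm
    exact (h2.comp hnorm_tend).const_mul_atTop (by positivity)
  rw [ENNReal.tendsto_nhds_top_iff_nnreal]
  intro r
  have hev1 : ∀ᶠ x in 𝓝[Ω] b, ‖x - b‖ < δ/2 := by
    have := hnorm_tend.mono_right nhdsWithin_le_nhds
    exact this.eventually_lt_const (half_pos hδ)
  have hev2 := (ENNReal.tendsto_nhds_top_iff_nnreal.1 htend) r
  filter_upwards [hev1, hev2, self_mem_nhdsWithin] with x h1 h2 hx
  exact h2.trans_le (hlow x hx h1)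
end
end

section
/- Let D ⊆ ℝ³ be an open set and a a boundary point of D satisfying the interior cone condition at a: there exist δ > 0, K ≥ 0 and an orthogonal 3×3 real matrix A such that the set C_a = {a + A(s,t) : (s,t) ∈ ℝ² × ℝ, K‖s‖ < t, ‖s‖² + t² < δ²} is contained in D. Then there exist constants C₃ > 0 and ε > 0 such that for every x ∈ ℝ³ with 0 < ‖x − a‖ < ε, ∫_{C_a} ‖∇G(z − x)‖² dz ≥ C₃ / ‖x − a‖; in particular ∫_{D ∩ B(a,δ)} ‖∇G(z − x)‖² dz ≥ C₃ / ‖x − a‖, where B(a,δ) is the open ball of radius δ centered at a. (The lower estimate of the blow-up rate stated in Remark 1.1.) -/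
open MeasureTheory
open scoped ENNReal

set_option maxHeartbeats 1000000

noncomputable section

lemma norm_sq_3 (v : EuclideanSpace ℝ (Fin 3)) : ‖v‖^2 = (v 0)^2 + (v 1)^2 + (v 2)^2 := by
  rw [EuclideanSpace.norm_eq, Real.sq_sqrt (by positivity)]
  simp [Fin.sum_univ_three, sq_abs]

lemma norm_sq_2 (s : EuclideanSpace ℝ (Fin 2)) : ‖s‖^2 = (s 0)^2 + (s 1)^2 := by
  rw [EuclideanSpace.norm_eq, Real.sq_sqrt (by positivity)]
  simp [Fin.sum_univ_two, sq_abs]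

lemma norm_emb (s : EuclideanSpace ℝ (Fin 2)) (t : ℝ) : ‖emb s t‖^2 = ‖s‖^2 + t^2 := by
  rw [norm_sq_3, norm_sq_2]; simp [emb]

def sof (v : EuclideanSpace ℝ (Fin 3)) : EuclideanSpace ℝ (Fin 2) :=
  (EuclideanSpace.equiv (Fin 2) ℝ).symm ![v 0, v 1]

lemma emb_sof (v : EuclideanSpace ℝ (Fin 3)) : emb (sof v) (v 2) = v := by
  ext i; fin_cases i <;> simp [emb, sof]

lemma sub_emb (v : EuclideanSpace ℝ (Fin 3)) (h : ℝ) :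
    ‖v - emb 0 h‖^2 = ‖sof v‖^2 + (v 2 - h)^2 := by
  have : v - emb 0 h = emb (sof v) (v 2 - h) := by
    ext i; fin_cases i <;> simp [emb, sof]
  rw [this, norm_emb]


/-- **The lower estimate of the blow-up rate in Remark 1.1.** Let `D ⊆ ℝ³` be open and
`a ∈ ∂D` satisfy the interior cone condition: for some `δ > 0`, `K ≥ 0` and an orthogonal
transformation `A` of `ℝ³`, the cone
`C_a = {a + A(s,t) : K‖s‖ < t, ‖s‖² + t² < δ²}` is contained in `D`. Then there exist
`C₃ > 0` and `ε > 0` such that for all `x` with `0 < ‖x − a‖ < ε`,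
`∫_{C_a} ‖∇G(z−x)‖² dz ≥ C₃/‖x−a‖`, and in particular
`∫_{D ∩ B(a,δ)} ‖∇G(z−x)‖² dz ≥ C₃/‖x−a‖`, where
`‖∇G(z−x)‖² = (16π²)⁻¹ ‖z−x‖⁻⁴`. -/
theorem blowup_rate_remark11 (D : Set (EuclideanSpace ℝ (Fin 3))) (hD : IsOpen D)
    (a : EuclideanSpace ℝ (Fin 3)) (ha : a ∈ frontier D)
    (δ K : ℝ) (hδ : 0 < δ) (hK : 0 ≤ K)
    (A : EuclideanSpace ℝ (Fin 3) ≃ₗᵢ[ℝ] EuclideanSpace ℝ (Fin 3))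
    (C_a : Set (EuclideanSpace ℝ (Fin 3)))
    (hCa : C_a = {z | ∃ (s : EuclideanSpace ℝ (Fin 2)) (t : ℝ),
      K * ‖s‖ < t ∧ ‖s‖ ^ 2 + t ^ 2 < δ ^ 2 ∧ z = a + A (emb s t)})
    (hsub : C_a ⊆ D) :
    ∃ C₃ > (0 : ℝ), ∃ ε > (0 : ℝ), ∀ x : EuclideanSpace ℝ (Fin 3),
      0 < ‖x - a‖ → ‖x - a‖ < ε →
        (ENNReal.ofReal (C₃ / ‖x - a‖) ≤
          ∫⁻ z in C_a, ENNReal.ofReal (1 / (16 * Real.pi ^ 2 * ‖z - x‖ ^ 4))) ∧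
        (ENNReal.ofReal (C₃ / ‖x - a‖) ≤
          ∫⁻ z in D ∩ Metric.ball a δ,
            ENNReal.ofReal (1 / (16 * Real.pi ^ 2 * ‖z - x‖ ^ 4))) := by
  
  have hπ : (0:ℝ) < Real.pi := Real.pi_pos
  set κ : ℝ := Real.sqrt Real.pi ^ 3 / Real.Gamma ((3:ℝ)/2 + 1) with hκdef
  have hκ : 0 < κ := div_pos (pow_pos (Real.sqrt_pos.mpr hπ) 3)
    (Real.Gamma_pos_of_pos (by norm_num))
  set ρ : ℝ := 1/(2*(K+1)) with hρdef
  have hρ : 0 < ρ := by positivity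
  have hρ2 : ρ ≤ 1/2 := by
    rw [hρdef, div_le_div_iff₀ (by positivity) (by norm_num)]; nlinarith
  have hρK : ρ * (2*(K+1)) = 1 := by rw [hρdef, one_div, inv_mul_cancel₀ (by positivity)]
  -- the subset relation C_a ⊆ D ∩ ball a δ
  have hsubset : C_a ⊆ D ∩ Metric.ball a δ := by
    intro z hz
    refine ⟨hsub hz, ?_⟩
    rw [hCa] at hz; obtain ⟨s, t, _h1, h2, rfl⟩ := hz
    rw [Metric.mem_ball, dist_eq_norm]
    have he : a + A (emb s t) - a = A (emb s t) := by abel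
    rw [he, A.norm_map]
    nlinarith [norm_emb s t, norm_nonneg (emb s t), hδ, h2]
  refine ⟨(3/2*ρ)^3 * κ / (16*Real.pi^2*256), by positivity, δ/3, by positivity, ?_⟩
  intro x hx hxε
  set r : ℝ := ‖x - a‖ with hrdef
  set h : ℝ := 3/2*r with hhdef
  have hh : 0 < h := by positivity
  set R : ℝ := ρ*h with hRdef
  have hR : 0 < R := by positivity
  clear_value r h R
  set p : EuclideanSpace ℝ (Fin 3) := a + A (emb 0 h) with hpdef
  clear_value p
  -- ball p R ⊆ C_a
  have hball : Metric.ball p R ⊆ C_a := by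
    intro w hw
    set v : EuclideanSpace ℝ (Fin 3) := A.symm (w - a) with hvdef
    clear_value v
    have hwp : ‖v - emb 0 h‖ < R := by
      have h1 : A (v - emb 0 h) = w - p := by
        rw [map_sub, hvdef, A.apply_symm_apply, hpdef]; abel
      have h2 : ‖v - emb 0 h‖ = ‖w - p‖ := by rw [← h1, A.norm_map]
      rw [h2]
      exact mem_ball_iff_norm.mp hw
    have hsq : ‖sof v‖^2 + (v 2 - h)^2 < R^2 := by
      rw [← sub_emb]
      exact pow_lt_pow_left₀ hwp (norm_nonneg _) two_ne_zero
    have hs : ‖sof v‖ < R := by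
      have h1 : ‖sof v‖^2 < R^2 := by nlinarith [sq_nonneg (v 2 - h)]
      exact lt_of_pow_lt_pow_left₀ 2 hR.le h1
    have ht : |v 2 - h| < R := by
      have h1 : |v 2 - h|^2 < R^2 := by rw [sq_abs]; nlinarith [sq_nonneg ‖sof v‖]
      exact lt_of_pow_lt_pow_left₀ 2 hR.le h1
    have htl : h - ρ*h < v 2 := by have := (abs_lt.mp ht).1; rw [hRdef] at this; linarith
    have htu : v 2 < h + ρ*h := by have := (abs_lt.mp ht).2; rw [hRdef] at this; linarith
    rw [hCa]
    refine ⟨sof v, v 2, ?_, ?_, ?_⟩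
    · -- K‖s‖ < t
      have e1 : K*‖sof v‖ ≤ K*(ρ*h) := by
        apply mul_le_mul_of_nonneg_left _ hK
        rw [hRdef] at hs; exact hs.le
      have e2 : K*(ρ*h) < h/2 := by nlinarith
      have e3 : h/2 ≤ h - ρ*h := by nlinarith
      linarith
    · -- inside ball of radius δ
      have eρ : ρ*h ≤ 1/2*h := mul_le_mul_of_nonneg_right hρ2 hh.le
      rw [hRdef] at hs
      have hsh : ‖sof v‖ < h/2 := by linarith
      have hv2u : v 2 < 3/2*h := by linarith
      have hv2l : 0 < v 2 := by linarith
      have hhδ : h < δ/2 := by rw [hhdef]; linarith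
      have q1 : ‖sof v‖^2 < (h/2)^2 := by nlinarith [norm_nonneg (sof v)]
      have q2 : (v 2)^2 < (3/2*h)^2 := by nlinarith
      nlinarith
    · -- w = a + A (emb s t)
      rw [emb_sof, hvdef, A.apply_symm_apply]; abel
  -- pointwise upper bound on ‖z - x‖
  have hzx : ∀ z ∈ Metric.ball p R, ‖z - x‖ ≤ 4*r := by
    intro z hz
    have h1 : ‖z - p‖ < R := mem_ball_iff_norm.mp hz
    have h2 : ‖p - a‖ = h := by
      have he : p - a = A (emb 0 h) := by rw [hpdef]; abel
      rw [he, A.norm_map, ← Real.sqrt_sq (norm_nonneg _), norm_emb]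
      simp [Real.sqrt_sq hh.le]
    have h3 : ‖a - x‖ = r := by rw [hrdef, norm_sub_rev]
    have h4 : ‖z - x‖ ≤ ‖z - p‖ + ‖p - a‖ + ‖a - x‖ := by
      calc ‖z - x‖ = ‖(z - p) + (p - a) + (a - x)‖ := by abel_nf
        _ ≤ ‖(z - p) + (p - a)‖ + ‖a - x‖ := norm_add_le _ _
        _ ≤ ‖z - p‖ + ‖p - a‖ + ‖a - x‖ := by gcongr; exact norm_add_le _ _
    have hRr : R ≤ 3/4*r := by rw [hRdef, hhdef]; nlinarith
    rw [h2, h3] at h4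
    rw [hhdef] at h4
    linarith
  -- constant lower bound on ball
  have cst : ENNReal.ofReal (1/(16*Real.pi^2*(4*r)^4)) * volume (Metric.ball p R) ≤
      ∫⁻ z in Metric.ball p R, ENNReal.ofReal (1 / (16 * Real.pi ^ 2 * ‖z - x‖ ^ 4)) := by
    rw [← setLIntegral_const]
    refine lintegral_mono_ae ?_
    have hne : ∀ᵐ z ∂(volume.restrict (Metric.ball p R)),
        z ≠ x := by
      refine ae_restrict_of_ae ?_
      have hx1 : {z : EuclideanSpace ℝ (Fin 3) | ¬ z ≠ x} = {x} := by ext w; simp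
      rw [ae_iff, hx1]
      exact measure_singleton x
    filter_upwards [hne, ae_restrict_mem measurableSet_ball] with z hz hzball
    apply ENNReal.ofReal_le_ofReal
    have h4 : ‖z - x‖ ≤ 4*r := hzx z hzball
    have h0 : 0 < ‖z - x‖ := by
      rw [norm_sub_pos_iff]; exact hz
    have h5 : 16*Real.pi^2*‖z - x‖^4 ≤ 16*Real.pi^2*(4*r)^4 := by
      gcongr
    exact one_div_le_one_div_of_le (by positivity) h5
  have hvol : volume (Metric.ball p R) = ENNReal.ofReal (R^3 * κ) := by
    rw [EuclideanSpace.volume_ball]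
    simp only [Fintype.card_fin]
    rw [← ENNReal.ofReal_pow hR.le, ← ENNReal.ofReal_mul (by positivity)]
    norm_num [hκdef]
  have key : ENNReal.ofReal ((3/2*ρ)^3 * κ / (16*Real.pi^2*256) / r) ≤
      ∫⁻ z in C_a, ENNReal.ofReal (1 / (16 * Real.pi ^ 2 * ‖z - x‖ ^ 4)) := by
    calc ENNReal.ofReal ((3/2*ρ)^3 * κ / (16*Real.pi^2*256) / r)
        = ENNReal.ofReal (1/(16*Real.pi^2*(4*r)^4)) * ENNReal.ofReal (R^3 * κ) := by
          rw [← ENNReal.ofReal_mul (by positivity)]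
          congr 1
          rw [hRdef, hhdef]
          field_simp
          ring
      _ ≤ ∫⁻ z in Metric.ball p R, ENNReal.ofReal (1 / (16 * Real.pi ^ 2 * ‖z - x‖ ^ 4)) := by
          rw [← hvol]; exact cst
      _ ≤ ∫⁻ z in C_a, ENNReal.ofReal (1 / (16 * Real.pi ^ 2 * ‖z - x‖ ^ 4)) :=
          lintegral_mono_set hball
  exact ⟨key, key.trans (lintegral_mono_set hsubset)⟩
end
end
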